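/- arXiv:1307.2702 — 2 statements merged into one kernel-verified Lean document; each statement's English description precedes it below -/
import Mathlib

section
/- Fix a prime ℓ and n ≥ 0. The map Ψ^co from the disjoint union over ν ∈ Part(n,ℓ) of the sets ∏_{i≥0} Part_ℓ(m_{ℓ^i}(ν)) to Part(n), given by ((λ^(ℓ^i))_i ↦ Σ_{i≥0} ℓ^i·(λ^(ℓ^i))ᵗ), is a bijection. -/
/-- A function `f : ℕ → ℕ` is a partition of `m` if it is weakly decreasing,
has finite support, and its parts sum to `m`.  Here `f i` is the `(i+1)`-st part
`λ_{i+1}` of the partition. -/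
def IsPartition (m : ℕ) (f : ℕ → ℕ) : Prop :=
  Antitone f ∧ (Function.support f).Finite ∧ ∑ᶠ i, f i = m

/-- The transpose partition: `ptranspose f j` is the `(j+1)`-st part `(fᵗ)_{j+1}`
of the transpose, i.e. the number of indices `i` with `f i ≥ j + 1`. -/
noncomputable def ptranspose (f : ℕ → ℕ) : ℕ → ℕ :=
  fun j => {i : ℕ | j + 1 ≤ f i}.ncard

/-- `pmult f j` is the multiplicity `m_j(f)` of `j ≥ 1` as a part of `f`. -/
noncomputable def pmult (f : ℕ → ℕ) (j : ℕ) : ℕ :=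
  {i : ℕ | f i = j}.ncard

/-- All (nonzero) parts of `f` are powers of `ℓ`. -/
def PartsPowersOf (ℓ : ℕ) (f : ℕ → ℕ) : Prop :=
  ∀ i, f i ≠ 0 → ∃ k, f i = ℓ ^ k

/-- `f` is `ℓ`-regular: every part `j ≥ 1` has multiplicity `< ℓ`. -/
def IsRegularPartition (ℓ : ℕ) (f : ℕ → ℕ) : Prop :=
  ∀ j, 1 ≤ j → pmult f j < ℓ

/-- The combinatorial generalized Springer map: given a tuple `lam` where `lam i`
is (meant to be) an `ℓ`-regular partition of `m_{ℓ^i}(ν)`, it returns the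
partition `Σ_{i ≥ 0} ℓ^i · (lam i)ᵗ` (componentwise operations). -/
noncomputable def psiCo (ℓ : ℕ) (lam : ℕ → ℕ → ℕ) : ℕ → ℕ :=
  fun j => ∑ᶠ i, ℓ ^ i * ptranspose (lam i) j


open Finset Function

-- a finite lower set in ℕ is an initial segment
lemma lower_eq_Iio {S : Set ℕ} (hfin : S.Finite) (hlow : ∀ a b, a ≤ b → b ∈ S → a ∈ S) :
    S = Set.Iio S.ncard := by
  rcases S.eq_empty_or_nonempty with h | h
  · rw [h]; ext a; simp
  · obtain ⟨M, hM, hmax⟩ := Set.Finite.exists_maximalFor id S hfin h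
    have hS : S = Set.Iic M := by
      ext a; constructor
      · intro ha
        by_contra hc
        have : M ≤ a := le_of_not_ge hc
        exact hc (hmax ha this)
      · intro ha; exact hlow a M ha hM
    have : S.ncard = M + 1 := by
      rw [hS]
      rw [show Set.Iic M = ↑(Finset.Iic M) by simp]
      rw [Set.ncard_coe_finset, Nat.card_Iic]
    rw [this, hS]
    ext a; simp [Nat.lt_succ_iff]

section Transpose

variable {f g : ℕ → ℕ}

lemma pt_setfin (hfin : (support f).Finite) (j : ℕ) : {i : ℕ | j + 1 ≤ f i}.Finite :=
  hfin.subset (fun i hi => by simp only [Set.mem_setOf_eq] at hi; simp [mem_support]; omega)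

lemma pt_set (hf : Antitone f) (hfin : (support f).Finite) (j : ℕ) :
    {i : ℕ | j + 1 ≤ f i} = Set.Iio (ptranspose f j) := by
  exact lower_eq_Iio (pt_setfin hfin j) (fun a b hab hb => le_trans hb (hf hab))

lemma pt_mem_iff (hf : Antitone f) (hfin : (support f).Finite) (i j : ℕ) :
    j + 1 ≤ f i ↔ i < ptranspose f j := by
  have := pt_set hf hfin j
  constructor
  · intro h; have : i ∈ Set.Iio (ptranspose f j) := this ▸ h; exact this
  · intro h; have : i ∈ {i : ℕ | j + 1 ≤ f i} := this ▸ Set.mem_Iio.mpr h; exact this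

lemma pt_anti (hf : Antitone f) (hfin : (support f).Finite) : Antitone (ptranspose f) := by
  intro a b hab
  apply Set.ncard_le_ncard _ (pt_setfin hfin a)
  intro i hi; simp only [Set.mem_setOf_eq] at hi ⊢; omega

lemma pt_zero_of_le (hf : Antitone f) {j : ℕ} (h : f 0 ≤ j) : ptranspose f j = 0 := by
  have : {i : ℕ | j + 1 ≤ f i} = ∅ := by
    ext i; simp only [Set.mem_setOf_eq, Set.mem_empty_iff_false, iff_false]
    intro hc
    have := hf (Nat.zero_le i)
    omega
  simp only [ptranspose]; rw [this, Set.ncard_empty]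

lemma pt_support (hf : Antitone f) : support (ptranspose f) ⊆ Set.Iio (f 0) := by
  intro j hj
  simp only [mem_support] at hj
  simp only [Set.mem_Iio]
  by_contra hc
  exact hj (pt_zero_of_le hf (by omega))

lemma pt_fin (hf : Antitone f) : (support (ptranspose f)).Finite :=
  (Set.finite_Iio _).subset (pt_support hf)

lemma pt_pt (hf : Antitone f) (hfin : (support f).Finite) :
    ptranspose (ptranspose f) = f := by
  funext i
  have hset : {j : ℕ | i + 1 ≤ ptranspose f j} = Set.Iio (f i) := by
    ext j
    simp only [Set.mem_setOf_eq, Set.mem_Iio]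
    rw [show (i + 1 ≤ ptranspose f j) ↔ i < ptranspose f j from Iff.rfl,
      ← pt_mem_iff hf hfin]
    omega
  rw [ptranspose, hset]
  rw [show Set.Iio (f i) = ↑(Finset.range (f i)) by simp [Finset.coe_range]]
  rw [Set.ncard_coe_finset, Finset.card_range]

lemma finsum_eq_range {N : ℕ} (hsupp : support f ⊆ Set.Iio N) :
    ∑ᶠ i, f i = ∑ i ∈ Finset.range N, f i := by
  apply finsum_eq_sum_of_support_subset
  rwa [Finset.coe_range]

lemma support_eq (hf : Antitone f) (hfin : (support f).Finite) :
    support f = Set.Iio (ptranspose f 0) := by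
  have := pt_set hf hfin 0
  rw [← this]; ext i; simp [mem_support]; omega

lemma ind_sum {M a : ℕ} (ha : a ≤ M) :
    ∑ j ∈ Finset.range M, (if j + 1 ≤ a then 1 else 0) = a := by
  rw [Finset.sum_ite, Finset.sum_const, Finset.sum_const]
  have : (Finset.range M).filter (fun j => j + 1 ≤ a) = Finset.range a := by
    ext j; simp [Finset.mem_filter, Finset.mem_range]; omega
  rw [this, Finset.card_range]; simp

lemma pt_sum (hf : Antitone f) (hfin : (support f).Finite) :
    ∑ᶠ j, ptranspose f j = ∑ᶠ i, f i := by
  rw [finsum_eq_range (f := ptranspose f) (pt_support hf),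
    finsum_eq_range (f := f) (le_of_eq (support_eq hf hfin))]
  set N := ptranspose f 0
  set M := f 0
  have hfle : ∀ i, f i ≤ M := fun i => hf (Nat.zero_le i)
  symm
  calc ∑ i ∈ Finset.range N, f i
      = ∑ i ∈ Finset.range N, ∑ j ∈ Finset.range M, (if j + 1 ≤ f i then 1 else 0) := by
        exact Finset.sum_congr rfl fun i _ => (ind_sum (hfle i)).symm
    _ = ∑ j ∈ Finset.range M, ∑ i ∈ Finset.range N, (if j + 1 ≤ f i then 1 else 0) :=
        Finset.sum_comm
    _ = ∑ j ∈ Finset.range M, ptranspose f j := by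
        apply Finset.sum_congr rfl
        intro j _
        rw [Finset.sum_ite, Finset.sum_const, Finset.sum_const]
        simp only [smul_eq_mul, mul_one, mul_zero, add_zero]
        have hNle : ptranspose f j ≤ N := pt_anti hf hfin (Nat.zero_le j)
        have hfil : (Finset.range N).filter (fun i => j + 1 ≤ f i)
            = Finset.range (ptranspose f j) := by
          ext i
          simp only [Finset.mem_filter, Finset.mem_range]
          rw [pt_mem_iff hf hfin]
          omega
        rw [hfil, Finset.card_range]

lemma pt_isPartition {m : ℕ} (h : IsPartition m f) : IsPartition m (ptranspose f) :=
  ⟨pt_anti h.1 h.2.1, pt_fin h.1, by rw [pt_sum h.1 h.2.1, h.2.2]⟩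

lemma pt_succ_le (hf : Antitone f) (hfin : (support f).Finite) (j : ℕ) :
    ptranspose f (j + 1) ≤ ptranspose f j := pt_anti hf hfin (Nat.le_succ j)

lemma pmult_eq_sub (hf : Antitone f) (hfin : (support f).Finite) (j : ℕ) :
    pmult f (j + 1) = ptranspose f j - ptranspose f (j + 1) := by
  have h1 : {i : ℕ | f i = j + 1}
      = Set.Iio (ptranspose f j) \ Set.Iio (ptranspose f (j + 1)) := by
    rw [← pt_set hf hfin, ← pt_set hf hfin]
    ext i; simp only [Set.mem_setOf_eq, Set.mem_diff]; omega
  rw [pmult, h1, show Set.Iio (ptranspose f j) \ Set.Iio (ptranspose f (j + 1))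
    = Set.Ico (ptranspose f (j+1)) (ptranspose f j) by
      ext x; simp only [Set.mem_diff, Set.mem_Iio, Set.mem_Ico]; omega]
  rw [show Set.Ico (ptranspose f (j+1)) (ptranspose f j)
    = ↑(Finset.Ico (ptranspose f (j+1)) (ptranspose f j)) by simp]
  rw [Set.ncard_coe_finset, Nat.card_Ico]

lemma pt_eq_sum_pmult (hf : Antitone f) (hfin : (support f).Finite) {B : ℕ}
    (hB : f 0 < B) (j : ℕ) :
    ptranspose f j = ∑ k ∈ Finset.Ico (j + 1) B, pmult f k := by
  rcases le_or_gt B (j + 1) with h | h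
  · rw [Finset.Ico_eq_empty (by omega), Finset.sum_empty, pt_zero_of_le hf (by omega)]
  · rw [Finset.sum_eq_sum_Ico_succ_bot h, ← pt_eq_sum_pmult hf hfin hB (j + 1),
      pmult_eq_sub hf hfin]
    have := pt_succ_le hf hfin j
    omega
termination_by B - j

lemma eq_of_pmult_eq (hf : Antitone f) (hffin : (support f).Finite)
    (hg : Antitone g) (hgfin : (support g).Finite)
    (h : ∀ k, pmult f (k + 1) = pmult g (k + 1)) : f = g := by
  have hpt : ptranspose f = ptranspose g := by
    funext j
    rw [pt_eq_sum_pmult hf hffin (B := max (f 0) (g 0) + 1) (by omega) j,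
      pt_eq_sum_pmult hg hgfin (B := max (f 0) (g 0) + 1) (by omega) j]
    apply Finset.sum_congr rfl
    intro k hk
    simp only [Finset.mem_Ico] at hk
    obtain ⟨k, rfl⟩ : ∃ k', k = k' + 1 := ⟨k - 1, by omega⟩
    exact h k
  rw [← pt_pt hf hffin, hpt, pt_pt hg hgfin]

lemma sum_swap_tail {B : ℕ} (c : ℕ → ℕ) :
    ∑ j ∈ Finset.range B, ∑ k ∈ Finset.Ico (j + 1) B, c k
      = ∑ k ∈ Finset.range B, k * c k := by
  have h1 : ∀ j ∈ Finset.range B, ∑ k ∈ Finset.Ico (j + 1) B, c k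
      = ∑ k ∈ Finset.range B, (if j + 1 ≤ k then c k else 0) := by
    intro j _
    rw [Finset.sum_ite, Finset.sum_const_zero, add_zero]
    apply Finset.sum_congr _ (fun _ _ => rfl)
    ext k; simp only [Finset.mem_filter, Finset.mem_range, Finset.mem_Ico]; omega
  rw [Finset.sum_congr rfl h1, Finset.sum_comm]
  apply Finset.sum_congr rfl
  intro k hk
  simp only [Finset.mem_range] at hk
  rw [Finset.sum_ite, Finset.sum_const, Finset.sum_const_zero, add_zero, smul_eq_mul]
  congr 1
  have : (Finset.range B).filter (fun j => j + 1 ≤ k) = Finset.range k := by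
    ext j; simp only [Finset.mem_filter, Finset.mem_range]; omega
  rw [this, Finset.card_range]

lemma sum_eq_sum_pmult (hf : Antitone f) (hfin : (support f).Finite) {B : ℕ}
    (hB : f 0 < B) : ∑ᶠ i, f i = ∑ k ∈ Finset.range B, k * pmult f k := by
  rw [← pt_sum hf hfin, finsum_eq_range (pt_support hf |>.trans (by
    intro x hx; simp only [Set.mem_Iio] at hx ⊢; omega : Set.Iio (f 0) ⊆ Set.Iio B))]
  rw [Finset.sum_congr rfl (fun j _ => pt_eq_sum_pmult hf hfin hB j), sum_swap_tail]

end Transpose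

section Digits

variable {ℓ : ℕ}

lemma digit_sum (hℓ2 : 2 ≤ ℓ) {I : ℕ} :
    ∀ a : ℕ, a < ℓ ^ I → ∑ i ∈ Finset.range I, ℓ ^ i * (a / ℓ ^ i % ℓ) = a := by
  induction I with
  | zero => intro a ha; simp at ha ⊢; omega
  | succ I ih =>
    intro a ha
    rw [Finset.sum_range_succ']
    have hstep : ∀ i, ℓ ^ (i + 1) * (a / ℓ ^ (i + 1) % ℓ)
        = ℓ * (ℓ ^ i * ((a / ℓ) / ℓ ^ i % ℓ)) := by
      intro i
      rw [Nat.div_div_eq_div_mul, ← pow_succ', pow_succ']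
      ring
    rw [Finset.sum_congr rfl (fun i _ => hstep i), ← Finset.mul_sum]
    rw [ih (a / ℓ) (by
      rw [Nat.div_lt_iff_lt_mul (by omega)]
      calc a < ℓ ^ (I + 1) := ha
        _ = ℓ ^ I * ℓ := by rw [pow_succ])]
    simp only [pow_zero, one_mul, Nat.div_one]
    exact Nat.div_add_mod a ℓ

lemma digit_head_lt (hℓ2 : 2 ≤ ℓ) (d : ℕ → ℕ) (hd : ∀ k, d k < ℓ) (i : ℕ) :
    ∑ k ∈ Finset.range i, ℓ ^ k * d k < ℓ ^ i := by
  induction i with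
  | zero => simp
  | succ i ih =>
    rw [Finset.sum_range_succ, pow_succ]
    have h1 : ℓ ^ i * d i ≤ ℓ ^ i * (ℓ - 1) := Nat.mul_le_mul_left _ (by have := hd i; omega)
    have h2 : ℓ ^ i * (ℓ - 1) = ℓ ^ i * ℓ - ℓ ^ i := by
      rw [Nat.mul_sub, mul_one]
    have h3 : 0 < ℓ ^ i := Nat.pow_pos (by omega)
    rw [h2] at h1
    have h4 : ℓ ^ i ≤ ℓ ^ i * ℓ := Nat.le_mul_of_pos_right _ (by omega)
    omega

lemma digit_extract (hℓ2 : 2 ≤ ℓ) {I : ℕ} (d : ℕ → ℕ) (hd : ∀ k, d k < ℓ) {i : ℕ}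
    (hi : i < I) : (∑ k ∈ Finset.range I, ℓ ^ k * d k) / ℓ ^ i % ℓ = d i := by
  have hsplit : ∑ k ∈ Finset.range I, ℓ ^ k * d k
      = ∑ k ∈ Finset.range (i + 1), ℓ ^ k * d k
        + ∑ k ∈ Finset.Ico (i + 1) I, ℓ ^ k * d k :=
    (Finset.sum_range_add_sum_Ico _ hi).symm
  have hIco : ∑ k ∈ Finset.Ico (i + 1) I, ℓ ^ k * d k
      = ℓ ^ (i + 1) * ∑ k ∈ Finset.range (I - (i + 1)), ℓ ^ k * d (i + 1 + k) := by
    rw [Finset.sum_Ico_eq_sum_range, Finset.mul_sum]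
    apply Finset.sum_congr rfl
    intro k _
    rw [pow_add]
    ring
  set T := ∑ k ∈ Finset.range (I - (i + 1)), ℓ ^ k * d (i + 1 + k) with hT
  set A := ∑ k ∈ Finset.range i, ℓ ^ k * d k with hA
  have hAlt : A < ℓ ^ i := digit_head_lt hℓ2 d hd i
  have htot : ∑ k ∈ Finset.range I, ℓ ^ k * d k = A + ℓ ^ i * (d i + ℓ * T) := by
    rw [hsplit, Finset.sum_range_succ, hIco, ← hA, pow_succ']
    ring
  rw [htot]
  have hpos : 0 < ℓ ^ i := Nat.pow_pos (by omega)
  rw [Nat.add_mul_div_left _ _ hpos, Nat.div_eq_of_lt hAlt, zero_add,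
    Nat.add_mul_mod_self_left, Nat.mod_eq_of_lt (hd i)]

lemma digit_unique (hℓ2 : 2 ≤ ℓ) {I : ℕ} (d e : ℕ → ℕ) (hd : ∀ k, d k < ℓ)
    (he : ∀ k, e k < ℓ)
    (h : ∑ k ∈ Finset.range I, ℓ ^ k * d k = ∑ k ∈ Finset.range I, ℓ ^ k * e k)
    {i : ℕ} (hi : i < I) : d i = e i := by
  rw [← digit_extract hℓ2 d hd hi, h, digit_extract hℓ2 e he hi]

end Digits

section OfMult

/-- tail-sum function: `tailsum c B j = ∑_{k=j+1}^{B-1} c k`. -/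
def tailsum (c : ℕ → ℕ) (B : ℕ) : ℕ → ℕ := fun j => ∑ k ∈ Finset.Ico (j + 1) B, c k

lemma tailsum_anti (c B) : Antitone (tailsum c B) := by
  intro a b hab
  exact Finset.sum_le_sum_of_subset (Finset.Ico_subset_Ico (by omega) le_rfl)

lemma tailsum_support (c B) : support (tailsum c B) ⊆ Set.Iio B := by
  intro j hj
  simp only [mem_support, tailsum] at hj
  simp only [Set.mem_Iio]
  by_contra hc
  exact hj (by rw [Finset.Ico_eq_empty (by omega), Finset.sum_empty])

lemma tailsum_fin (c B) : (support (tailsum c B)).Finite :=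
  (Set.finite_Iio _).subset (tailsum_support c B)

/-- the partition whose multiplicity function is `c` (supported on `[1, B)`). -/
noncomputable def pofm (c : ℕ → ℕ) (B : ℕ) : ℕ → ℕ := ptranspose (tailsum c B)

lemma pofm_anti (c B) : Antitone (pofm c B) := pt_anti (tailsum_anti c B) (tailsum_fin c B)

lemma pofm_fin (c B) : (support (pofm c B)).Finite := pt_fin (tailsum_anti c B)

lemma pofm_pt (c B) : ptranspose (pofm c B) = tailsum c B :=
  pt_pt (tailsum_anti c B) (tailsum_fin c B)

lemma pofm_sum (c B) : ∑ᶠ i, pofm c B i = ∑ k ∈ Finset.range B, k * c k := by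
  rw [pofm, pt_sum (tailsum_anti c B) (tailsum_fin c B), finsum_eq_range (tailsum_support c B)]
  exact sum_swap_tail c

lemma pofm_isPartition (c B) : IsPartition (∑ k ∈ Finset.range B, k * c k) (pofm c B) :=
  ⟨pofm_anti c B, pofm_fin c B, pofm_sum c B⟩

lemma pofm_pmult {c B} (hc : ∀ k, B ≤ k → c k = 0) (k : ℕ) :
    pmult (pofm c B) (k + 1) = c (k + 1) := by
  rw [pmult_eq_sub (pofm_anti c B) (pofm_fin c B), pofm_pt]
  rcases lt_or_ge (k + 1) B with h | h
  · rw [show tailsum c B k = c (k + 1) + tailsum c B (k + 1) by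
      rw [tailsum, tailsum, Finset.sum_eq_sum_Ico_succ_bot h]]
    omega
  · rw [show tailsum c B k = 0 by
        rw [tailsum]; exact (by rw [Finset.Ico_eq_empty (by omega), Finset.sum_empty]),
      show tailsum c B (k + 1) = 0 by
        rw [tailsum]; exact (by rw [Finset.Ico_eq_empty (by omega), Finset.sum_empty]),
      hc (k + 1) h]

lemma pofm_pmult' {c B : ℕ → ℕ} : True := trivial

lemma pofm_pmult_ge {c : ℕ → ℕ} {B : ℕ} (hc : ∀ k, B ≤ k → c k = 0) {k : ℕ} (hk : 1 ≤ k) :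
    pmult (pofm c B) k = c k := by
  obtain ⟨k', rfl⟩ : ∃ k', k = k' + 1 := ⟨k - 1, by omega⟩
  exact pofm_pmult hc k'

end OfMult

section Misc

variable {f : ℕ → ℕ}

lemma partition_zero (h : IsPartition 0 f) : f = 0 := by
  obtain ⟨hanti, hfin, hsum⟩ := h
  rw [finsum_eq_sum f hfin] at hsum
  funext i
  by_cases hi : i ∈ support f
  · exact (Finset.sum_eq_zero_iff.mp hsum i (hfin.mem_toFinset.mpr hi))
  · simpa [mem_support] using hi

lemma pt_zero_fun : ptranspose (0 : ℕ → ℕ) = 0 := by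
  funext j
  have : {i : ℕ | j + 1 ≤ (0 : ℕ → ℕ) i} = ∅ := by ext i; simp
  simp [ptranspose, this]

lemma pmult_zero_fun (k : ℕ) : pmult (0 : ℕ → ℕ) (k + 1) = 0 := by
  have : {i : ℕ | (0 : ℕ → ℕ) i = k + 1} = ∅ := by ext i; simp
  simp [pmult, this]

lemma pmult_eq_zero_of_gt (hf : Antitone f) {k : ℕ} (hk : f 0 < k) : pmult f k = 0 := by
  have : {i : ℕ | f i = k} = ∅ := by
    ext i
    simp only [Set.mem_setOf_eq, Set.mem_empty_iff_false, iff_false]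
    intro hc
    have := hf (Nat.zero_le i)
    omega
  simp [pmult, this]

lemma pmult_ne_zero (hfin : (support f).Finite) {i k : ℕ} (hk : 1 ≤ k) (hik : f i = k) :
    pmult f k ≠ 0 := by
  have hsub : {i' : ℕ | f i' = k} ⊆ support f := fun i' hi' => by
    simp only [Set.mem_setOf_eq] at hi'; simp [mem_support]; omega
  have hpos : 0 < pmult f k :=
    Set.ncard_pos (hfin.subset hsub) |>.mpr ⟨i, hik⟩
  omega

lemma sum_pow_reindex {ℓ : ℕ} (hℓ2 : 2 ≤ ℓ) (c : ℕ → ℕ) (I B : ℕ)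
    (hzero : ∀ k, 1 ≤ k → c k ≠ 0 → ∃ i, i < I ∧ k = ℓ ^ i)
    (hlt : ∀ i, i < I → c (ℓ ^ i) ≠ 0 → ℓ ^ i < B) :
    ∑ k ∈ Finset.range B, k * c k = ∑ i ∈ Finset.range I, ℓ ^ i * c (ℓ ^ i) := by
  have hℓ1 : 1 < ℓ := by omega
  rw [← Finset.sum_filter_ne_zero (Finset.range B) (f := fun k => k * c k),
    ← Finset.sum_filter_ne_zero (Finset.range I) (f := fun i => ℓ ^ i * c (ℓ ^ i))]
  apply Finset.sum_nbij' (fun k => Nat.log ℓ k) (fun i => ℓ ^ i)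
  · intro k hk
    simp only [Finset.mem_filter, Finset.mem_range] at hk ⊢
    obtain ⟨hkB, hne⟩ := hk
    have hk1 : 1 ≤ k := Nat.pos_of_ne_zero (fun h0 => hne (by simp [h0]))
    have hck : c k ≠ 0 := fun hc => hne (by simp [hc])
    obtain ⟨i, hiI, rfl⟩ := hzero k hk1 hck
    rw [Nat.log_pow hℓ1]
    refine ⟨hiI, ?_⟩
    have : 0 < ℓ ^ i := Nat.pow_pos (by omega)
    positivity
  · intro i hi
    simp only [Finset.mem_filter, Finset.mem_range] at hi ⊢
    obtain ⟨hiI, hne⟩ := hi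
    have hci : c (ℓ ^ i) ≠ 0 := fun hc => hne (by simp [hc])
    refine ⟨hlt i hiI hci, ?_⟩
    have : 0 < ℓ ^ i := Nat.pow_pos (by omega)
    intro hc
    have : ℓ ^ i * c (ℓ ^ i) ≠ 0 := by positivity
    exact this hc
  · intro k hk
    simp only [Finset.mem_filter, Finset.mem_range] at hk
    obtain ⟨hkB, hne⟩ := hk
    have hk1 : 1 ≤ k := Nat.pos_of_ne_zero (fun h0 => hne (by simp [h0]))
    have hck : c k ≠ 0 := fun hc => hne (by simp [hc])
    obtain ⟨i, hiI, rfl⟩ := hzero k hk1 hck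
    rw [Nat.log_pow hℓ1]
  · intro i hi
    rw [Nat.log_pow hℓ1]
  · intro k hk
    simp only [Finset.mem_filter, Finset.mem_range] at hk
    obtain ⟨hkB, hne⟩ := hk
    have hk1 : 1 ≤ k := Nat.pos_of_ne_zero (fun h0 => hne (by simp [h0]))
    have hck : c k ≠ 0 := fun hc => hne (by simp [hc])
    obtain ⟨i, hiI, rfl⟩ := hzero k hk1 hck
    rw [Nat.log_pow hℓ1]

end Misc

section Main

variable {ℓ n : ℕ}

lemma psiCo_eq_range {lam : ℕ → ℕ → ℕ} {I : ℕ}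
    (h0 : ∀ i, I ≤ i → ptranspose (lam i) = 0) (j : ℕ) :
    psiCo ℓ lam j = ∑ i ∈ Finset.range I, ℓ ^ i * ptranspose (lam i) j := by
  apply finsum_eq_sum_of_support_subset
  rw [Finset.coe_range]
  intro i hi
  simp only [mem_support] at hi
  simp only [Set.mem_Iio]
  by_contra hc
  rw [h0 i (by omega)] at hi
  simp at hi

lemma nu_big_pow (hℓ2 : 2 ≤ ℓ) {ν : ℕ → ℕ} (i : ℕ) (hi : ν 0 + 1 ≤ i) : ν 0 < ℓ ^ i := by
  calc ν 0 < 2 ^ (ν 0 + 1) := by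
        have := Nat.lt_two_pow_self (n := ν 0); have := Nat.pow_le_pow_right (by omega : 1 ≤ 2) hi; omega
    _ ≤ ℓ ^ i := by
        calc 2 ^ (ν 0 + 1) ≤ 2 ^ i := Nat.pow_le_pow_right (by omega) hi
          _ ≤ ℓ ^ i := Nat.pow_le_pow_left hℓ2 i

lemma psiCo_isPartition (hℓ2 : 2 ≤ ℓ) {ν : ℕ → ℕ} {lam : ℕ → ℕ → ℕ}
    (hν : IsPartition n ν) (hpow : PartsPowersOf ℓ ν)
    (hlam : ∀ i, IsPartition (pmult ν (ℓ ^ i)) (lam i)) :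
    IsPartition n (psiCo ℓ lam) := by
  obtain ⟨hanti, hfin, hsum⟩ := hν
  set I := ν 0 + 1 with hI
  have hlam0 : ∀ i, I ≤ i → lam i = 0 := by
    intro i hi
    have h1 : pmult ν (ℓ ^ i) = 0 := pmult_eq_zero_of_gt hanti (nu_big_pow hℓ2 i hi)
    exact partition_zero (h1 ▸ hlam i)
  have hpt0 : ∀ i, I ≤ i → ptranspose (lam i) = 0 := by
    intro i hi; rw [hlam0 i hi, pt_zero_fun]
  have hrange := fun j => psiCo_eq_range (ℓ := ℓ) hpt0 j
  set K := ∑ i ∈ Finset.range I, lam i 0 with hK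
  have hKle : ∀ i, i ∈ Finset.range I → lam i 0 ≤ K :=
    fun i hi => Finset.single_le_sum (f := fun i => lam i 0) (fun _ _ => Nat.zero_le _) hi
  refine ⟨?_, ?_, ?_⟩
  · intro a b hab
    rw [hrange a, hrange b]
    apply Finset.sum_le_sum
    intro i _
    exact Nat.mul_le_mul_left _ (pt_anti (hlam i).1 (hlam i).2.1 hab)
  · apply (Set.finite_Iio K).subset
    intro j hj
    simp only [mem_support] at hj
    simp only [Set.mem_Iio]
    by_contra hc
    apply hj
    rw [hrange j]
    apply Finset.sum_eq_zero
    intro i hi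
    rw [pt_zero_of_le (hlam i).1 (by have := hKle i hi; omega), mul_zero]
  · have hsupp : support (psiCo ℓ lam) ⊆ Set.Iio K := by
      intro j hj
      simp only [mem_support] at hj
      simp only [Set.mem_Iio]
      by_contra hc
      apply hj
      rw [hrange j]
      apply Finset.sum_eq_zero
      intro i hi
      rw [pt_zero_of_le (hlam i).1 (by have := hKle i hi; omega), mul_zero]
    rw [finsum_eq_range hsupp, Finset.sum_congr rfl (fun j _ => hrange j), Finset.sum_comm]
    have hinner : ∀ i, i ∈ Finset.range I →
        ∑ j ∈ Finset.range K, ℓ ^ i * ptranspose (lam i) j = ℓ ^ i * pmult ν (ℓ ^ i) := by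
      intro i hi
      rw [← Finset.mul_sum]
      congr 1
      have hsub : support (ptranspose (lam i)) ⊆ Set.Iio K := by
        apply (pt_support (hlam i).1).trans
        intro x hx
        simp only [Set.mem_Iio] at hx ⊢
        have := hKle i hi
        omega
      rw [← finsum_eq_range hsub, pt_sum (hlam i).1 (hlam i).2.1, (hlam i).2.2]
    rw [Finset.sum_congr rfl hinner]
    rw [← sum_pow_reindex hℓ2 (pmult ν) I (ν 0 + 1) ?_ ?_]
    · rw [← sum_eq_sum_pmult hanti hfin (by omega), hsum]
    · intro k hk1 hkne
      obtain ⟨i', hi'⟩ := Set.nonempty_of_ncard_ne_zero hkne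
      simp only [Set.mem_setOf_eq] at hi'
      obtain ⟨mm, hmm⟩ := hpow i' (by omega)
      refine ⟨mm, ?_, by omega⟩
      have hk0 : k ≤ ν 0 := hi' ▸ hanti (Nat.zero_le i')
      by_contra hc
      have := nu_big_pow hℓ2 (ν := ν) mm (by omega)
      omega
    · intro i hiI hne
      have : ℓ ^ i ≤ ν 0 := by
        by_contra hc
        exact hne (pmult_eq_zero_of_gt hanti (by omega))
      omega

lemma pmult_zero_of_not_pow {ν : ℕ → ℕ} (hfin : (support ν).Finite)
    (hpow : PartsPowersOf ℓ ν) {k : ℕ} (hk : ¬ ∃ m, k + 1 = ℓ ^ m) :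
    pmult ν (k + 1) = 0 := by
  by_contra hc
  obtain ⟨i', hi'⟩ := Set.nonempty_of_ncard_ne_zero hc
  simp only [Set.mem_setOf_eq] at hi'
  obtain ⟨m, hm⟩ := hpow i' (by omega)
  exact hk ⟨m, by omega⟩

lemma psiCo_inj (hℓ2 : 2 ≤ ℓ) {ν₁ ν₂ : ℕ → ℕ} {lam₁ lam₂ : ℕ → ℕ → ℕ}
    (hν₁ : IsPartition n ν₁) (hpow₁ : PartsPowersOf ℓ ν₁)
    (hlam₁ : ∀ i, IsPartition (pmult ν₁ (ℓ ^ i)) (lam₁ i) ∧ IsRegularPartition ℓ (lam₁ i))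
    (hν₂ : IsPartition n ν₂) (hpow₂ : PartsPowersOf ℓ ν₂)
    (hlam₂ : ∀ i, IsPartition (pmult ν₂ (ℓ ^ i)) (lam₂ i) ∧ IsRegularPartition ℓ (lam₂ i))
    (heq : psiCo ℓ lam₁ = psiCo ℓ lam₂) : ν₁ = ν₂ ∧ lam₁ = lam₂ := by
  set I := max (ν₁ 0 + 1) (ν₂ 0 + 1) with hIdef
  have hlam0₁ : ∀ i, I ≤ i → lam₁ i = 0 := by
    intro i hi
    have h1 : pmult ν₁ (ℓ ^ i) = 0 :=
      pmult_eq_zero_of_gt hν₁.1 (nu_big_pow hℓ2 i (by omega))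
    exact partition_zero (h1 ▸ (hlam₁ i).1)
  have hlam0₂ : ∀ i, I ≤ i → lam₂ i = 0 := by
    intro i hi
    have h1 : pmult ν₂ (ℓ ^ i) = 0 :=
      pmult_eq_zero_of_gt hν₂.1 (nu_big_pow hℓ2 i (by omega))
    exact partition_zero (h1 ▸ (hlam₂ i).1)
  have hrange₁ := fun j => psiCo_eq_range (ℓ := ℓ) (I := I) (lam := lam₁)
    (fun i hi => by rw [hlam0₁ i hi, pt_zero_fun]) j
  have hrange₂ := fun j => psiCo_eq_range (ℓ := ℓ) (I := I) (lam := lam₂)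
    (fun i hi => by rw [hlam0₂ i hi, pt_zero_fun]) j
  have hd : ∀ (lam : ℕ → ℕ → ℕ)
      (hl : ∀ i, Antitone (lam i) ∧ (support (lam i)).Finite)
      (hr : ∀ j, psiCo ℓ lam j = ∑ i ∈ Finset.range I, ℓ ^ i * ptranspose (lam i) j)
      (j : ℕ),
      ∑ i ∈ Finset.range I, ℓ ^ i * pmult (lam i) (j + 1) + psiCo ℓ lam (j + 1)
        = psiCo ℓ lam j := by
    intro lam hl hr j
    rw [hr j, hr (j + 1), ← Finset.sum_add_distrib]
    apply Finset.sum_congr rfl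
    intro i _
    rw [← Nat.mul_add, pmult_eq_sub (hl i).1 (hl i).2,
      Nat.sub_add_cancel (pt_succ_le (hl i).1 (hl i).2 j)]
  have hd₁ := hd lam₁ (fun i => ⟨(hlam₁ i).1.1, (hlam₁ i).1.2.1⟩) hrange₁
  have hd₂ := hd lam₂ (fun i => ⟨(hlam₂ i).1.1, (hlam₂ i).1.2.1⟩) hrange₂
  have hpm : ∀ i j, pmult (lam₁ i) (j + 1) = pmult (lam₂ i) (j + 1) := by
    intro i j
    rcases lt_or_ge i I with hiI | hiI
    · have hMeq : ∑ i ∈ Finset.range I, ℓ ^ i * pmult (lam₁ i) (j + 1)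
          = ∑ i ∈ Finset.range I, ℓ ^ i * pmult (lam₂ i) (j + 1) := by
        have h1 := hd₁ j
        have h2 := hd₂ j
        rw [heq] at h1
        omega
      exact digit_unique hℓ2 _ _ (fun k => (hlam₁ k).2 (j + 1) (by omega))
        (fun k => (hlam₂ k).2 (j + 1) (by omega)) hMeq hiI
    · rw [hlam0₁ i hiI, hlam0₂ i hiI]
  have hlam_eq : lam₁ = lam₂ := funext fun i =>
    eq_of_pmult_eq (hlam₁ i).1.1 (hlam₁ i).1.2.1 (hlam₂ i).1.1 (hlam₂ i).1.2.1 (hpm i)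
  refine ⟨?_, hlam_eq⟩
  apply eq_of_pmult_eq hν₁.1 hν₁.2.1 hν₂.1 hν₂.2.1
  intro k
  by_cases h : ∃ m, k + 1 = ℓ ^ m
  · obtain ⟨m, hm⟩ := h
    rw [hm, ← (hlam₁ m).1.2.2, ← (hlam₂ m).1.2.2, hlam_eq]
  · rw [pmult_zero_of_not_pow hν₁.2.1 hpow₁ h, pmult_zero_of_not_pow hν₂.2.1 hpow₂ h]

lemma ncard_Iio (c : ℕ) : (Set.Iio c).ncard = c := by
  rw [show Set.Iio c = ↑(Finset.range c) by simp, Set.ncard_coe_finset, Finset.card_range]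

lemma psiCo_surj (hℓ2 : 2 ≤ ℓ) {μ : ℕ → ℕ} (hμ : IsPartition n μ) :
    ∃ ν lam, IsPartition n ν ∧ PartsPowersOf ℓ ν ∧
      (∀ i, IsPartition (pmult ν (ℓ ^ i)) (lam i) ∧ IsRegularPartition ℓ (lam i)) ∧
      psiCo ℓ lam = μ := by
  have hℓ1 : 1 < ℓ := by omega
  set ρ := ptranspose μ with hρdef
  have hρ : IsPartition n ρ := pt_isPartition hμ
  have hptρ : ptranspose ρ = μ := pt_pt hμ.1 hμ.2.1
  set B := ρ 0 + 1 with hBdef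
  have hMB : ∀ k, B ≤ k → pmult ρ k = 0 := fun k hk =>
    pmult_eq_zero_of_gt hρ.1 (by omega)
  set I := μ 0 + 1 with hIdef
  have hMlt : ∀ k, 1 ≤ k → pmult ρ k < ℓ ^ I := by
    intro k hk
    have hsub : {i : ℕ | ρ i = k} ⊆ support ρ := fun i hi => by
      simp only [Set.mem_setOf_eq] at hi; simp [mem_support]; omega
    have h1 : pmult ρ k ≤ (support ρ).ncard :=
      Set.ncard_le_ncard hsub hρ.2.1
    rw [support_eq hρ.1 hρ.2.1, ncard_Iio] at h1
    have h2 : ptranspose ρ 0 = μ 0 := congrFun hptρ 0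
    have h3 : μ 0 < ℓ ^ I := nu_big_pow hℓ2 (ν := μ) I le_rfl
    omega
  set m : ℕ → ℕ → ℕ := fun i k => pmult ρ k / ℓ ^ i % ℓ with hmdef
  have hmB : ∀ i k, B ≤ k → m i k = 0 := by
    intro i k hk; simp only [hmdef, hMB k hk, Nat.zero_div, Nat.zero_mod]
  have hmI : ∀ i k, I ≤ i → 1 ≤ k → m i k = 0 := by
    intro i k hi hk
    have h1 : pmult ρ k < ℓ ^ i :=
      lt_of_lt_of_le (hMlt k hk) (Nat.pow_le_pow_right (by omega) hi)
    simp only [hmdef, Nat.div_eq_of_lt h1, Nat.zero_mod]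
  set s : ℕ → ℕ := fun i => ∑ k ∈ Finset.range B, k * m i k with hsdef
  have hs0 : ∀ i, I ≤ i → s i = 0 := by
    intro i hi
    apply Finset.sum_eq_zero
    intro k _
    rcases Nat.eq_zero_or_pos k with h0 | h1
    · simp [h0]
    · rw [hmI i k hi h1, mul_zero]
  set lam : ℕ → ℕ → ℕ := fun i => pofm (m i) B with hlamdef
  set c : ℕ → ℕ := fun k => if ℓ ^ Nat.log ℓ k = k ∧ 1 ≤ k then s (Nat.log ℓ k) else 0
    with hcdef
  set B' := ℓ ^ I with hB'def
  have hcB' : ∀ k, B' ≤ k → c k = 0 := by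
    intro k hk
    simp only [hcdef]
    split
    · next h =>
      exact hs0 _ ((Nat.le_log_iff_pow_le hℓ1 (by omega)).mpr hk)
    · rfl
  set ν := pofm c B' with hνdef
  have hc_pow : ∀ i, c (ℓ ^ i) = s i := by
    intro i
    have hpos : 0 < ℓ ^ i := Nat.pow_pos (by omega)
    simp only [hcdef]
    rw [Nat.log_pow hℓ1, if_pos ⟨rfl, hpos⟩]
  have hνp : ∀ k, 1 ≤ k → pmult ν k = c k := fun k hk => pofm_pmult_ge hcB' hk
  have hlamp : ∀ i k, 1 ≤ k → pmult (lam i) k = m i k := fun i k hk =>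
    pofm_pmult_ge (fun k' hk' => hmB i k' hk') hk
  refine ⟨ν, lam, ?_, ?_, ?_, ?_⟩
  · -- IsPartition n ν
    have hpart := pofm_isPartition c B'
    have hsum_eq : ∑ k ∈ Finset.range B', k * c k = n := by
      rw [sum_pow_reindex hℓ2 c I B' ?_ ?_]
      · calc ∑ i ∈ Finset.range I, ℓ ^ i * c (ℓ ^ i)
            = ∑ i ∈ Finset.range I, ℓ ^ i * s i := by
              exact Finset.sum_congr rfl (fun i _ => by rw [hc_pow i])
          _ = ∑ i ∈ Finset.range I, ∑ k ∈ Finset.range B, ℓ ^ i * (k * m i k) := by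
              exact Finset.sum_congr rfl (fun i _ => by rw [hsdef]; exact Finset.mul_sum _ _ _)
          _ = ∑ k ∈ Finset.range B, ∑ i ∈ Finset.range I, ℓ ^ i * (k * m i k) :=
              Finset.sum_comm
          _ = ∑ k ∈ Finset.range B, k * pmult ρ k := by
              apply Finset.sum_congr rfl
              intro k _
              rcases Nat.eq_zero_or_pos k with h0 | h1
              · simp [h0]
              · have : ∑ i ∈ Finset.range I, ℓ ^ i * (k * m i k)
                    = k * ∑ i ∈ Finset.range I, ℓ ^ i * m i k := by
                  rw [Finset.mul_sum]
                  exact Finset.sum_congr rfl (fun i _ => by ring)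
                rw [this, hmdef]
                congr 1
                exact digit_sum hℓ2 (pmult ρ k) (hMlt k h1)
          _ = n := by
              rw [← sum_eq_sum_pmult hρ.1 hρ.2.1 (by omega), hρ.2.2]
      · intro k hk1 hck
        simp only [hcdef] at hck
        by_cases hcond : ℓ ^ Nat.log ℓ k = k ∧ 1 ≤ k
        · rw [if_pos hcond] at hck
          refine ⟨Nat.log ℓ k, ?_, hcond.1.symm⟩
          by_contra hc2
          exact hck (hs0 _ (by omega))
        · rw [if_neg hcond] at hck
          exact absurd rfl hck
      · intro i hiI _
        exact Nat.pow_lt_pow_right hℓ1 hiI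
    exact hsum_eq ▸ hpart
  · -- PartsPowersOf
    intro i0 hne
    have hk1 : 1 ≤ ν i0 := by omega
    have hp : pmult ν (ν i0) ≠ 0 := pmult_ne_zero (pofm_fin c B') hk1 rfl
    rw [hνp _ hk1] at hp
    simp only [hcdef] at hp
    by_cases hcond : ℓ ^ Nat.log ℓ (ν i0) = ν i0 ∧ 1 ≤ ν i0
    · exact ⟨Nat.log ℓ (ν i0), hcond.1.symm⟩
    · rw [if_neg hcond] at hp
      exact absurd rfl hp
  · -- each lam i a regular partition of pmult ν (ℓ ^ i)
    intro i
    constructor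
    · have hpart := pofm_isPartition (m i) B
      have h1 : pmult ν (ℓ ^ i) = s i := by
        rw [hνp _ (Nat.pow_pos (by omega)), hc_pow]
      rw [h1]
      exact hsdef ▸ hpart
    · intro j hj
      rw [hlamp i j hj]
      exact Nat.mod_lt _ (by omega)
  · -- psiCo ℓ lam = μ
    funext j
    have hpt0 : ∀ i, I ≤ i → ptranspose (lam i) = 0 := by
      intro i hi
      rw [hlamdef]
      simp only
      rw [pofm_pt]
      funext j'
      apply Finset.sum_eq_zero
      intro k hk
      simp only [Finset.mem_Ico] at hk
      exact hmI i k hi (by omega)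
    rw [psiCo_eq_range hpt0 j]
    have hterm : ∀ i, ptranspose (lam i) j = ∑ k ∈ Finset.Ico (j + 1) B, m i k := by
      intro i
      rw [hlamdef]
      simp only
      rw [pofm_pt]
      rfl
    calc ∑ i ∈ Finset.range I, ℓ ^ i * ptranspose (lam i) j
        = ∑ i ∈ Finset.range I, ∑ k ∈ Finset.Ico (j + 1) B, ℓ ^ i * m i k := by
          exact Finset.sum_congr rfl (fun i _ => by rw [hterm i, Finset.mul_sum])
      _ = ∑ k ∈ Finset.Ico (j + 1) B, ∑ i ∈ Finset.range I, ℓ ^ i * m i k :=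
          Finset.sum_comm
      _ = ∑ k ∈ Finset.Ico (j + 1) B, pmult ρ k := by
          apply Finset.sum_congr rfl
          intro k hk
          simp only [Finset.mem_Ico] at hk
          exact digit_sum hℓ2 (pmult ρ k) (hMlt k (by omega))
      _ = ptranspose ρ j := (pt_eq_sum_pmult hρ.1 hρ.2.1 (by omega) j).symm
      _ = μ j := congrFun hptρ j

end Main

/-- The map `Ψ^co` from the disjoint union, over `ν ∈ Part(n,ℓ)`, of the sets
`∏_{i≥0} Part_ℓ(m_{ℓ^i}(ν))` to `Part(n)`, given by
`(λ^{(ℓ^i)})_i ↦ Σ_{i≥0} ℓ^i · (λ^{(ℓ^i)})ᵗ`, is a bijection. -/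
theorem PsiCo_bijection (ℓ n : ℕ) (hℓ : ℓ.Prime) :
    ∃ e : {p : (ℕ → ℕ) × (ℕ → ℕ → ℕ) //
            IsPartition n p.1 ∧ PartsPowersOf ℓ p.1 ∧
            ∀ i, IsPartition (pmult p.1 (ℓ ^ i)) (p.2 i) ∧
              IsRegularPartition ℓ (p.2 i)} ≃
          {μ : ℕ → ℕ // IsPartition n μ},
      ∀ p, (e p : ℕ → ℕ) = psiCo ℓ p.1.2 := by
  have hℓ2 : 2 ≤ ℓ := hℓ.two_le
  refine ⟨Equiv.ofBijective
    (fun p => ⟨psiCo ℓ p.val.2, psiCo_isPartition hℓ2 p.prop.1 p.prop.2.1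
      (fun i => (p.prop.2.2 i).1)⟩) ⟨?_, ?_⟩, fun p => rfl⟩
  · intro p q hpq
    have heq : psiCo ℓ p.val.2 = psiCo ℓ q.val.2 := congrArg Subtype.val hpq
    obtain ⟨h1, h2⟩ := psiCo_inj hℓ2 p.prop.1 p.prop.2.1 p.prop.2.2
      q.prop.1 q.prop.2.1 q.prop.2.2 heq
    exact Subtype.ext (Prod.ext h1 h2)
  · intro ⟨μ, hμ⟩
    obtain ⟨ν, lam, h1, h2, h3, h4⟩ := psiCo_surj hℓ2 hμ
    exact ⟨⟨(ν, lam), h1, h2, h3⟩, Subtype.ext h4⟩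
end

section
/- Fix a prime ℓ. For distinct ν, ν' ∈ Part(n,ℓ), the images of ψ^co_ν and ψ^co_{ν'} in Part(n) are disjoint; that is, if Σ_{i≥0} ℓ^i·(λ^(ℓ^i))ᵗ = Σ_{i≥0} ℓ^i·(κ^(ℓ^i))ᵗ where λ^(ℓ^i) ∈ Part_ℓ(m_{ℓ^i}(ν)) and κ^(ℓ^i) ∈ Part_ℓ(m_{ℓ^i}(ν')), then ν = ν'. -/
lemma pmult_set_fin {f : ℕ → ℕ} (hf : (Function.support f).Finite) {j : ℕ} (hj : 1 ≤ j) :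
    {i : ℕ | f i = j}.Finite :=
  hf.subset (fun i hi => by simp only [Set.mem_setOf_eq] at hi; simp [Function.mem_support]; omega)

lemma ptr_set_fin {f : ℕ → ℕ} (hf : (Function.support f).Finite) (j : ℕ) :
    {i : ℕ | j + 1 ≤ f i}.Finite :=
  hf.subset (fun i hi => by simp only [Set.mem_setOf_eq] at hi; simp [Function.mem_support]; omega)

lemma ptranspose_succ {f : ℕ → ℕ} (hf : (Function.support f).Finite) (j : ℕ) :
    ptranspose f j = pmult f (j + 1) + ptranspose f (j + 1) := by
  have h1 : {i : ℕ | f i = j + 1}.Finite := pmult_set_fin hf (by omega)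
  have h2 : {i : ℕ | j + 1 + 1 ≤ f i}.Finite := ptr_set_fin hf (j + 1)
  have hU : {i : ℕ | j + 1 ≤ f i} = {i : ℕ | f i = j + 1} ∪ {i : ℕ | j + 1 + 1 ≤ f i} := by
    ext i; simp only [Set.mem_setOf_eq, Set.mem_union]; omega
  have hd : Disjoint {i : ℕ | f i = j + 1} {i : ℕ | j + 1 + 1 ≤ f i} := by
    rw [Set.disjoint_left]; intro i hi hi'
    simp only [Set.mem_setOf_eq] at hi hi'; omega
  rw [ptranspose, pmult, ptranspose, hU, Set.ncard_union_eq hd h1 h2]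

lemma ptranspose_eq_sum {f : ℕ → ℕ} (hf : (Function.support f).Finite) (j N : ℕ) :
    ptranspose f j = (∑ t ∈ Finset.range N, pmult f (j + 1 + t)) + ptranspose f (j + N) := by
  induction N with
  | zero => simp
  | succ N ih =>
    rw [ih, ptranspose_succ hf (j + N), Finset.sum_range_succ]
    have : j + 1 + N = j + N + 1 := by omega
    rw [this]
    have : j + (N + 1) = j + N + 1 := by omega
    rw [this]; omega

lemma ptranspose_eq_zero {f : ℕ → ℕ} (h : ∀ i, f i ≤ j) : ptranspose f j = 0 := by
  have : {i : ℕ | j + 1 ≤ f i} = ∅ := by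
    ext i; simp only [Set.mem_setOf_eq, Set.mem_empty_iff_false, iff_false]
    have := h i; omega
  rw [ptranspose, this, Set.ncard_empty]

lemma mem_iff_lt_ncard {S : Set ℕ} (hS : S.Finite)
    (hlow : ∀ a b : ℕ, a ≤ b → b ∈ S → a ∈ S) (k : ℕ) : k ∈ S ↔ k < S.ncard := by
  constructor
  · intro hk
    have hsub : Set.Iic k ⊆ S := fun a ha => hlow a k ha hk
    have h1 : (Set.Iic k).ncard ≤ S.ncard := Set.ncard_le_ncard hsub hS
    have h2 : (Set.Iic k).ncard = k + 1 := by
      rw [← Finset.coe_Iic, Set.ncard_coe_finset, Nat.card_Iic]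
    omega
  · intro hk
    by_contra hknot
    have hsub : S ⊆ Set.Iio k := by
      intro m hm
      simp only [Set.mem_Iio]
      by_contra hmk
      exact hknot (hlow k m (by omega) hm)
    have h1 : S.ncard ≤ (Set.Iio k).ncard := Set.ncard_le_ncard hsub (Set.finite_Iio k)
    have h2 : (Set.Iio k).ncard = k := by
      rw [← Finset.coe_Iio, Set.ncard_coe_finset, Nat.card_Iio]
    omega

lemma antitone_mem_iff {f : ℕ → ℕ} (hant : Antitone f) (hf : (Function.support f).Finite)
    (i j : ℕ) : j + 1 ≤ f i ↔ i < ptranspose f j := by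
  exact mem_iff_lt_ncard (ptr_set_fin hf j)
    (fun a b hab hb => le_trans hb (hant hab)) i

lemma le_of_ptranspose_le {f g : ℕ → ℕ} (hfa : Antitone f) (hff : (Function.support f).Finite)
    (hga : Antitone g) (hgf : (Function.support g).Finite)
    (h : ∀ j, ptranspose f j ≤ ptranspose g j) (i : ℕ) : f i ≤ g i := by
  by_contra hlt
  push_neg at hlt
  have h1 : g i + 1 ≤ f i := hlt
  have h2 := (antitone_mem_iff hfa hff i (g i)).mp h1
  have h3 := lt_of_lt_of_le h2 (h (g i))
  have h4 := (antitone_mem_iff hga hgf i (g i)).mpr h3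
  omega

lemma eq_of_pmult_eq_s11 {f g : ℕ → ℕ} (hfa : Antitone f) (hff : (Function.support f).Finite)
    (hga : Antitone g) (hgf : (Function.support g).Finite)
    (h : ∀ k, 1 ≤ k → pmult f k = pmult g k) : f = g := by
  have hptr : ∀ j, ptranspose f j = ptranspose g j := by
    intro j
    set N := max (f 0) (g 0) with hN
    rw [ptranspose_eq_sum hff j N, ptranspose_eq_sum hgf j N,
      ptranspose_eq_zero (f := f) (fun i => by have := hfa (Nat.zero_le i); omega),
      ptranspose_eq_zero (f := g) (fun i => by have := hga (Nat.zero_le i); omega)]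
    congr 1
    exact Finset.sum_congr rfl (fun t _ => h (j + 1 + t) (by omega))
  funext i
  exact le_antisymm
    (le_of_ptranspose_le hfa hff hga hgf (fun j => (hptr j).le) i)
    (le_of_ptranspose_le hga hgf hfa hff (fun j => (hptr j).ge) i)

lemma digits_unique {ℓ : ℕ} (hℓ : 2 ≤ ℓ) :
    ∀ (N : ℕ) (a b : ℕ → ℕ), (∀ i, a i < ℓ) → (∀ i, b i < ℓ) →
    (∑ i ∈ Finset.range N, ℓ ^ i * a i) = (∑ i ∈ Finset.range N, ℓ ^ i * b i) →
    ∀ i < N, a i = b i := by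
  intro N
  induction N with
  | zero => intro a b _ _ _ i hi; omega
  | succ N ih =>
    intro a b ha hb hsum i hi
    rw [Finset.sum_range_succ' (fun i => ℓ ^ i * a i),
      Finset.sum_range_succ' (fun i => ℓ ^ i * b i)] at hsum
    have key : ℓ * (∑ i ∈ Finset.range N, ℓ ^ i * a (i + 1)) + a 0
             = ℓ * (∑ i ∈ Finset.range N, ℓ ^ i * b (i + 1)) + b 0 := by
      rw [Finset.mul_sum, Finset.mul_sum]
      have e1 : ∀ c : ℕ → ℕ, ∀ t ∈ Finset.range N,
          ℓ * (ℓ ^ t * c (t + 1)) = ℓ ^ (t + 1) * c (t + 1) := by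
        intro c t _; ring
      rw [Finset.sum_congr rfl (e1 a), Finset.sum_congr rfl (e1 b)]
      simpa using hsum
    have hmod : a 0 = b 0 := by
      have m1 : (ℓ * (∑ i ∈ Finset.range N, ℓ ^ i * a (i + 1)) + a 0) % ℓ = a 0 :=
        by rw [Nat.mul_add_mod, Nat.mod_eq_of_lt (ha 0)]
      have m2 : (ℓ * (∑ i ∈ Finset.range N, ℓ ^ i * b (i + 1)) + b 0) % ℓ = b 0 :=
        by rw [Nat.mul_add_mod, Nat.mod_eq_of_lt (hb 0)]
      rw [← m1, ← m2, key]
    rcases i with _ | k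
    · exact hmod
    · have hsum' : (∑ i ∈ Finset.range N, ℓ ^ i * a (i + 1))
                 = (∑ i ∈ Finset.range N, ℓ ^ i * b (i + 1)) := by
        have := key
        rw [hmod] at this
        have h2 := Nat.add_right_cancel this
        exact Nat.eq_of_mul_eq_mul_left (by omega) h2
      exact ih (fun i => a (i + 1)) (fun i => b (i + 1)) (fun i => ha _) (fun i => hb _)
        hsum' k (by omega)

lemma isPartition_zero {f : ℕ → ℕ} (h : IsPartition 0 f) : ∀ x, f x = 0 := by
  intro x
  by_contra hx
  obtain ⟨-, hfin, hsum⟩ := h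
  rw [finsum_eq_sum f hfin] at hsum
  have hmem : x ∈ hfin.toFinset := by
    rw [Set.Finite.mem_toFinset]; exact hx
  exact hx (Finset.sum_eq_zero_iff.mp hsum x hmem)

/-- For distinct `ν, ν' ∈ Part(n,ℓ)`, the images of `ψ^co_ν` and `ψ^co_{ν'}`
are disjoint: if `Σ_i ℓ^i·(lam i)ᵗ = Σ_i ℓ^i·(kap i)ᵗ`, where `lam i` is an
`ℓ`-regular partition of `m_{ℓ^i}(ν)` and `kap i` is an `ℓ`-regular partition
of `m_{ℓ^i}(ν')`, then `ν = ν'`. -/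
theorem psiCo_images_disjoint (ℓ n : ℕ) (hℓ : ℓ.Prime)
    (ν ν' : ℕ → ℕ)
    (hν : IsPartition n ν) (hpow : PartsPowersOf ℓ ν)
    (hν' : IsPartition n ν') (hpow' : PartsPowersOf ℓ ν')
    (lam kap : ℕ → ℕ → ℕ)
    (hlam : ∀ i, IsPartition (pmult ν (ℓ ^ i)) (lam i) ∧ IsRegularPartition ℓ (lam i))
    (hkap : ∀ i, IsPartition (pmult ν' (ℓ ^ i)) (kap i) ∧ IsRegularPartition ℓ (kap i))
    (heq : psiCo ℓ lam = psiCo ℓ kap) :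
    ν = ν' := by
  have hℓ2 : 2 ≤ ℓ := hℓ.two_le
  set M := max (ν 0) (ν' 0) + 1 with hM
  have hbig : ∀ i, M ≤ i → pmult ν (ℓ ^ i) = 0 ∧ pmult ν' (ℓ ^ i) = 0 := by
    intro i hi
    have hpg : i < ℓ ^ i := Nat.lt_pow_self (by omega)
    constructor
    · have he : {x : ℕ | ν x = ℓ ^ i} = ∅ := by
        ext x
        simp only [Set.mem_setOf_eq, Set.mem_empty_iff_false, iff_false]
        intro hx
        have h0 : ν x ≤ ν 0 := hν.1 (Nat.zero_le x)
        omega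
      rw [pmult, he, Set.ncard_empty]
    · have he : {x : ℕ | ν' x = ℓ ^ i} = ∅ := by
        ext x
        simp only [Set.mem_setOf_eq, Set.mem_empty_iff_false, iff_false]
        intro hx
        have h0 : ν' x ≤ ν' 0 := hν'.1 (Nat.zero_le x)
        omega
      rw [pmult, he, Set.ncard_empty]
  have hlamz : ∀ i, M ≤ i → ∀ x, lam i x = 0 := by
    intro i hi
    have h := (hlam i).1
    rw [(hbig i hi).1] at h
    exact isPartition_zero h
  have hkapz : ∀ i, M ≤ i → ∀ x, kap i x = 0 := by
    intro i hi
    have h := (hkap i).1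
    rw [(hbig i hi).2] at h
    exact isPartition_zero h
  have hlamt : ∀ i, M ≤ i → ∀ j, ptranspose (lam i) j = 0 := fun i hi j =>
    ptranspose_eq_zero (fun x => by rw [hlamz i hi x]; omega)
  have hkapt : ∀ i, M ≤ i → ∀ j, ptranspose (kap i) j = 0 := fun i hi j =>
    ptranspose_eq_zero (fun x => by rw [hkapz i hi x]; omega)
  have heqj : ∀ j, (∑ i ∈ Finset.range M, ℓ ^ i * ptranspose (lam i) j)
      = ∑ i ∈ Finset.range M, ℓ ^ i * ptranspose (kap i) j := by
    intro j
    have h1 : ∑ᶠ i, ℓ ^ i * ptranspose (lam i) j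
        = ∑ i ∈ Finset.range M, ℓ ^ i * ptranspose (lam i) j := by
      apply finsum_eq_sum_of_support_subset
      intro i hi
      simp only [Function.mem_support] at hi
      simp only [Finset.coe_range, Set.mem_Iio]
      by_contra hge
      rw [hlamt i (by omega) j] at hi
      simp at hi
    have h2 : ∑ᶠ i, ℓ ^ i * ptranspose (kap i) j
        = ∑ i ∈ Finset.range M, ℓ ^ i * ptranspose (kap i) j := by
      apply finsum_eq_sum_of_support_subset
      intro i hi
      simp only [Function.mem_support] at hi
      simp only [Finset.coe_range, Set.mem_Iio]
      by_contra hge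
      rw [hkapt i (by omega) j] at hi
      simp at hi
    have hc := congrFun heq j
    simp only [psiCo] at hc
    rw [h1, h2] at hc
    exact hc
  have hdig : ∀ k, 1 ≤ k → ∀ i, pmult (lam i) k = pmult (kap i) k := by
    intro k hk
    obtain ⟨j, rfl⟩ : ∃ j, k = j + 1 := ⟨k - 1, by omega⟩
    have hsplit : ∀ (c : ℕ → ℕ → ℕ), (∀ i, (Function.support (c i)).Finite) →
        (∑ i ∈ Finset.range M, ℓ ^ i * ptranspose (c i) j)
        = (∑ i ∈ Finset.range M, ℓ ^ i * pmult (c i) (j + 1))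
          + ∑ i ∈ Finset.range M, ℓ ^ i * ptranspose (c i) (j + 1) := by
      intro c hc
      rw [← Finset.sum_add_distrib]
      apply Finset.sum_congr rfl
      intro i _
      rw [ptranspose_succ (hc i) j, Nat.mul_add]
    have e1 := hsplit lam (fun i => (hlam i).1.2.1)
    have e2 := hsplit kap (fun i => (hkap i).1.2.1)
    have hj := heqj j
    have hj1 := heqj (j + 1)
    rw [e1, e2] at hj
    have hsum : (∑ i ∈ Finset.range M, ℓ ^ i * pmult (lam i) (j + 1))
        = ∑ i ∈ Finset.range M, ℓ ^ i * pmult (kap i) (j + 1) := by omega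
    intro i
    by_cases hi : i < M
    · exact digits_unique hℓ2 M _ _ (fun i => (hlam i).2 (j + 1) (by omega))
        (fun i => (hkap i).2 (j + 1) (by omega)) hsum i hi
    · have hz1 : pmult (lam i) (j + 1) = 0 := by
        have he : {x : ℕ | lam i x = j + 1} = ∅ := by
          ext x
          simp only [Set.mem_setOf_eq, Set.mem_empty_iff_false, iff_false]
          rw [hlamz i (by omega) x]
          omega
        rw [pmult, he, Set.ncard_empty]
      have hz2 : pmult (kap i) (j + 1) = 0 := by
        have he : {x : ℕ | kap i x = j + 1} = ∅ := by
          ext x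
          simp only [Set.mem_setOf_eq, Set.mem_empty_iff_false, iff_false]
          rw [hkapz i (by omega) x]
          omega
        rw [pmult, he, Set.ncard_empty]
      rw [hz1, hz2]
  have hlk : ∀ i, lam i = kap i := fun i =>
    eq_of_pmult_eq_s11 (hlam i).1.1 (hlam i).1.2.1 (hkap i).1.1 (hkap i).1.2.1
      (fun k hk => hdig k hk i)
  have hmult : ∀ k, 1 ≤ k → pmult ν k = pmult ν' k := by
    intro k hk
    by_cases hpk : ∃ m, k = ℓ ^ m
    · obtain ⟨m, rfl⟩ := hpk
      have h1 := (hlam m).1.2.2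
      have h2 := (hkap m).1.2.2
      rw [← h1, ← h2, hlk m]
    · have hz : ∀ (g : ℕ → ℕ), PartsPowersOf ℓ g → {x : ℕ | g x = k} = ∅ := by
        intro g hg
        ext x
        simp only [Set.mem_setOf_eq, Set.mem_empty_iff_false, iff_false]
        intro hx
        obtain ⟨m, hm⟩ := hg x (by omega)
        exact hpk ⟨m, by omega⟩
      rw [pmult, pmult, hz ν hpow, hz ν' hpow']
  exact eq_of_pmult_eq_s11 hν.1 hν.2.1 hν'.1 hν'.2.1 hmult
end
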